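/- Suppose {a_n}_{n=0}^∞ is a Stieltjes moment sequence with representing measure μ, κ is an integer ≥ 2, {a_n^{1/κ}}_{n=0}^∞ is a Stieltjes moment sequence with representing measure ν, and {a_n}_{n=0}^∞ is determinate. Then (i) supp ν ⊆ {x ∈ [0,∞) : x^κ ∈ supp μ}; (ii) card(supp ν) ≤ card(supp μ); (iii) sup supp ν = (sup supp μ)^{1/κ} (with the convention that the κ-th root of ∞ is ∞). -/

import Mathlib

open MeasureTheory

/-- The closed support of a Borel measure: the set of points all of whose open
neighbourhoods have positive measure. -/
def msupport {X : Type*} [TopologicalSpace X] [MeasurableSpace X] (μ : Measure X) : Set X :=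
  {x | ∀ U : Set X, IsOpen U → x ∈ U → 0 < μ U}

/-- `μ` is a representing measure (on `[0,∞)`, modelled as a measure on `ℝ` vanishing on
`(-∞,0)`) of the Stieltjes moment sequence `a`. -/
def IsRepMeas (a : ℕ → ℝ) (μ : Measure ℝ) : Prop :=
  (∀ n, 0 ≤ a n) ∧ μ (Set.Iio 0) = 0 ∧
    ∀ n : ℕ, ∫⁻ x, ENNReal.ofReal (x ^ n) ∂μ = ENNReal.ofReal (a n)

/-- `a` is a Stieltjes moment sequence. -/
def IsStieltjes (a : ℕ → ℝ) : Prop :=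
  ∃ μ : Measure ℝ, IsRepMeas a μ

/-- A Stieltjes moment sequence is determinate if it has a unique representing measure. -/
def IsDeterminate (a : ℕ → ℝ) : Prop :=
  ∀ μ ν : Measure ℝ, IsRepMeas a μ → IsRepMeas a ν → μ = ν


noncomputable def powMeas (ν : Measure ℝ) : ℕ → Measure ℝ
  | 0 => Measure.dirac 1
  | k + 1 => Measure.map (fun p : ℝ × ℝ => p.1 * p.2) (ν.prod (powMeas ν k))

lemma not_mem_msupport {X : Type*} [TopologicalSpace X] [MeasurableSpace X] {μ : Measure X}
    {x : X} : x ∉ msupport μ ↔ ∃ U : Set X, IsOpen U ∧ x ∈ U ∧ μ U = 0 := by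
  simp only [msupport, Set.mem_setOf_eq, not_forall, pos_iff_ne_zero, not_not]
  tauto

lemma measure_compl_msupport {X : Type*} [TopologicalSpace X] [MeasurableSpace X]
    [SecondCountableTopology X] (μ : Measure X) :
    μ (msupport μ)ᶜ = 0 := by
  have h : ∀ x : ((msupport μ)ᶜ : Set X), ∃ U : Set X, IsOpen U ∧ (x : X) ∈ U ∧ μ U = 0 :=
    fun x => not_mem_msupport.1 x.2
  choose U hUo hUm hU0 using h
  obtain ⟨T, hTc, hT⟩ := TopologicalSpace.isOpen_iUnion_countable U hUo
  have h1 : μ (⋃ i ∈ T, U i) = 0 := (measure_biUnion_null_iff hTc).2 fun i _ => hU0 i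
  have h2 : (msupport μ)ᶜ ⊆ ⋃ i ∈ T, U i := by
    rw [hT]; exact fun x hx => Set.mem_iUnion.2 ⟨⟨x, hx⟩, hUm _⟩
  exact le_antisymm ((measure_mono h2).trans h1.le) zero_le

lemma measure_null_of_disjoint_msupport {X : Type*} [TopologicalSpace X] [MeasurableSpace X]
    [SecondCountableTopology X] {μ : Measure X} {O : Set X}
    (hd : ∀ x ∈ O, x ∉ msupport μ) : μ O = 0 := by
  have : O ⊆ (msupport μ)ᶜ := fun x hx => hd x hx
  exact le_antisymm ((measure_mono this).trans (measure_compl_msupport μ).le) zero_le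

lemma measurable_mul2 : Measurable fun p : ℝ × ℝ => p.1 * p.2 :=
  measurable_fst.mul measurable_snd

section
variable (ν : Measure ℝ) [IsFiniteMeasure ν]

lemma powMeas_finite (k : ℕ) : IsFiniteMeasure (powMeas ν k) := by
  induction k with
  | zero => exact inferInstanceAs (IsFiniteMeasure (Measure.dirac 1))
  | succ k ih =>
    haveI := ih
    exact (ν.prod (powMeas ν k)).isFiniteMeasure_map _


lemma powMeas_neg (hν0 : ν (Set.Iio 0) = 0) (k : ℕ) : powMeas ν k (Set.Iio 0) = 0 := by
  induction k with
  | zero =>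
    rw [powMeas, Measure.dirac_apply' _ measurableSet_Iio]
    simp
  | succ k ih =>
    haveI := powMeas_finite ν k
    rw [powMeas, Measure.map_apply measurable_mul2 measurableSet_Iio]
    have hsub : (fun p : ℝ × ℝ => p.1 * p.2) ⁻¹' Set.Iio 0 ⊆
        (Set.Iio 0 ×ˢ Set.univ) ∪ (Set.univ ×ˢ Set.Iio 0) := by
      rintro ⟨x, y⟩ h
      simp only [Set.mem_preimage, Set.mem_Iio] at h
      by_contra hc
      simp only [Set.mem_union, Set.mem_prod, Set.mem_Iio, Set.mem_univ, and_true, true_and,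
        not_or, not_lt] at hc
      nlinarith [mul_nonneg hc.1 hc.2]
    refine le_antisymm (le_trans (measure_mono hsub) ?_) zero_le
    refine le_trans (measure_union_le _ _) ?_
    rw [Measure.prod_prod, Measure.prod_prod, hν0, ih]
    simp

-- mem of support maps to support of powMeas
lemma powMeas_supp_mem {x : ℝ} (hx : x ∈ msupport ν) (k : ℕ) :
    x ^ k ∈ msupport (powMeas ν k) := by
  induction k with
  | zero =>
    intro V hV h1
    have h1' : (1:ℝ) ∈ V := by simpa using h1
    rw [powMeas, Measure.dirac_apply' _ hV.measurableSet]
    simp [Set.indicator, h1']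
  | succ k ih =>
    haveI := powMeas_finite ν k
    intro V hV hxV
    have hpre : IsOpen ((fun p : ℝ × ℝ => p.1 * p.2) ⁻¹' V) := hV.preimage continuous_mul
    have hmem : (x, x ^ k) ∈ (fun p : ℝ × ℝ => p.1 * p.2) ⁻¹' V := by
      simpa [pow_succ, mul_comm] using hxV
    obtain ⟨u, v, hu, hv, hxu, hxv, huv⟩ := isOpen_prod_iff.1 hpre x (x ^ k) hmem
    rw [powMeas, Measure.map_apply measurable_mul2 hV.measurableSet]
    calc (0 : ENNReal) < ν u * powMeas ν k v := by
          exact ENNReal.mul_pos (hx u hu hxu).ne' (ih v hv hxv).ne'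
      _ = (ν.prod (powMeas ν k)) (u ×ˢ v) := (Measure.prod_prod u v).symm
      _ ≤ _ := measure_mono huv

lemma powMeas_bound (hν0 : ν (Set.Iio 0) = 0) {c : ℝ} (hc : 0 ≤ c)
    (hbd : ∀ x ∈ msupport ν, x ≤ c) (k : ℕ) :
    ∀ y ∈ msupport (powMeas ν k), y ≤ c ^ k := by
  induction k with
  | zero =>
    intro y hy
    by_contra h
    push_neg at h
    have h1 : (powMeas ν 0) (Set.Ioi (c ^ 0)) = 0 := by
      rw [powMeas, Measure.dirac_apply' _ measurableSet_Ioi]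
      simp [Set.indicator]
    exact absurd (hy _ isOpen_Ioi h) (by rw [h1]; simp)
  | succ k ih =>
    haveI := powMeas_finite ν k
    intro y hy
    by_contra h
    push_neg at h
    have hνc : ν (Set.Icc 0 c)ᶜ = 0 := by
      have : (Set.Icc (0:ℝ) c)ᶜ ⊆ Set.Iio 0 ∪ Set.Ioi c := by
        intro z hz
        simp only [Set.mem_compl_iff, Set.mem_Icc, not_and, not_le] at hz
        rcases le_or_gt 0 z with h0 | h0
        · exact Or.inr (hz h0)
        · exact Or.inl h0
      refine le_antisymm (le_trans (measure_mono this) ?_) zero_le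
      refine le_trans (measure_union_le _ _) ?_
      have : ν (Set.Ioi c) = 0 := measure_null_of_disjoint_msupport
        (fun z hz hm => absurd (hbd z hm) (not_le.2 hz))
      rw [hν0, this]; simp
    have hkc : (powMeas ν k) (Set.Icc 0 (c ^ k))ᶜ = 0 := by
      have : (Set.Icc (0:ℝ) (c ^ k))ᶜ ⊆ Set.Iio 0 ∪ Set.Ioi (c ^ k) := by
        intro z hz
        simp only [Set.mem_compl_iff, Set.mem_Icc, not_and, not_le] at hz
        rcases le_or_gt 0 z with h0 | h0
        · exact Or.inr (hz h0)
        · exact Or.inl h0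
      refine le_antisymm (le_trans (measure_mono this) ?_) zero_le
      refine le_trans (measure_union_le _ _) ?_
      have h1 : (powMeas ν k) (Set.Ioi (c ^ k)) = 0 := measure_null_of_disjoint_msupport
        (fun z hz hm => absurd (ih z hm) (not_le.2 hz))
      rw [powMeas_neg ν hν0 k, h1]; simp
    have hnull : (powMeas ν (k + 1)) (Set.Ioi (c ^ (k + 1))) = 0 := by
      rw [powMeas, Measure.map_apply measurable_mul2 measurableSet_Ioi]
      have hsub : (fun p : ℝ × ℝ => p.1 * p.2) ⁻¹' Set.Ioi (c ^ (k + 1)) ⊆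
          ((Set.Icc 0 c)ᶜ ×ˢ Set.univ) ∪ (Set.univ ×ˢ (Set.Icc 0 (c ^ k))ᶜ) := by
        rintro ⟨z, w⟩ hzw
        simp only [Set.mem_preimage, Set.mem_Ioi] at hzw
        by_contra hcon
        simp only [Set.mem_union, Set.mem_prod, Set.mem_univ, and_true, true_and, not_or,
          Set.notMem_compl_iff, Set.mem_Icc] at hcon
        obtain ⟨⟨hz0, hzc⟩, ⟨hw0, hwc⟩⟩ := hcon
        have : z * w ≤ c * c ^ k := mul_le_mul hzc hwc hw0 hc
        rw [pow_succ] at hzw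
        nlinarith
      refine le_antisymm (le_trans (measure_mono hsub) ?_) zero_le
      refine le_trans (measure_union_le _ _) ?_
      rw [Measure.prod_prod, Measure.prod_prod, hνc, hkc]
      simp
    exact absurd (hy _ isOpen_Ioi h) (by rw [hnull]; simp)
end

section
variable (ν : Measure ℝ) [IsFiniteMeasure ν]

lemma ae_nonneg {m : Measure ℝ} (hm : m (Set.Iio 0) = 0) : ∀ᵐ x ∂m, 0 ≤ x := by
  rw [ae_iff]
  convert hm using 2
  ext x
  simp

lemma powMeas_moment (hν0 : ν (Set.Iio 0) = 0) (n : ℕ) (k : ℕ) :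
    ∫⁻ x, ENNReal.ofReal (x ^ n) ∂(powMeas ν k) = (∫⁻ x, ENNReal.ofReal (x ^ n) ∂ν) ^ k := by
  have hmeas : Measurable fun x : ℝ => ENNReal.ofReal (x ^ n) :=
    (measurable_id.pow_const n).ennreal_ofReal
  induction k with
  | zero =>
    rw [powMeas, lintegral_dirac' _ hmeas]
    simp
  | succ k ih =>
    haveI := powMeas_finite ν k
    rw [powMeas, lintegral_map hmeas measurable_mul2]
    rw [lintegral_prod _ ((measurable_mul2.pow_const n).ennreal_ofReal.aemeasurable)]
    have hnegk := powMeas_neg ν hν0 k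
    calc ∫⁻ x, ∫⁻ y, ENNReal.ofReal ((x * y) ^ n) ∂(powMeas ν k) ∂ν
        = ∫⁻ x, ENNReal.ofReal (x ^ n) * (∫⁻ x, ENNReal.ofReal (x ^ n) ∂ν) ^ k ∂ν := by
          refine lintegral_congr_ae ?_
          filter_upwards [ae_nonneg hν0] with x hx
          have : ∫⁻ y, ENNReal.ofReal ((x * y) ^ n) ∂(powMeas ν k)
              = ∫⁻ y, ENNReal.ofReal (x ^ n) * ENNReal.ofReal (y ^ n) ∂(powMeas ν k) := by
            refine lintegral_congr_ae ?_
            filter_upwards [ae_nonneg hnegk] with y hy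
            rw [mul_pow, ENNReal.ofReal_mul (pow_nonneg hx n)]
          rw [this, lintegral_const_mul _ hmeas, ih]
      _ = (∫⁻ x, ENNReal.ofReal (x ^ n) ∂ν) ^ (k + 1) := by
          rw [lintegral_mul_const _ hmeas, pow_succ, mul_comm]
end


theorem stmt4 (a : ℕ → ℝ) (μ ν : Measure ℝ) (κ : ℕ) (hκ : 2 ≤ κ)
    (hμ : IsRepMeas a μ)
    (hν : IsRepMeas (fun n => a n ^ (1 / (κ : ℝ))) ν)
    (hdet : IsDeterminate a) :
    msupport ν ⊆ {x : ℝ | 0 ≤ x ∧ x ^ κ ∈ msupport μ} ∧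
    Cardinal.mk (msupport ν) ≤ Cardinal.mk (msupport μ) ∧
    ((BddAbove (msupport μ) ↔ BddAbove (msupport ν)) ∧
      ∀ s : ℝ, IsLUB (msupport μ) s → IsLUB (msupport ν) (s ^ (1 / (κ : ℝ)))) := by
  obtain ⟨ha, hμ0, hμm⟩ := hμ
  obtain ⟨hb, hν0, hνm⟩ := hν
  have hb : ∀ n, 0 ≤ a n ^ (1 / (κ : ℝ)) := hb
  have hνm : ∀ n : ℕ, ∫⁻ x, ENNReal.ofReal (x ^ n) ∂ν = ENNReal.ofReal (a n ^ (1 / (κ : ℝ))) :=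
    hνm
  have hκR : (κ : ℝ) ≠ 0 := by positivity
  have hrpow_pow : ∀ t : ℝ, 0 ≤ t → (t ^ (1 / (κ : ℝ))) ^ κ = t := by
    intro t ht
    rw [← Real.rpow_natCast (t ^ (1 / (κ : ℝ))) κ, ← Real.rpow_mul ht,
      one_div_mul_cancel hκR, Real.rpow_one]
  have hpow_rpow : ∀ t : ℝ, 0 ≤ t → (t ^ κ) ^ (1 / (κ : ℝ)) = t := by
    intro t ht
    rw [← Real.rpow_natCast t κ, ← Real.rpow_mul ht, mul_one_div, div_self hκR, Real.rpow_one]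
  have hν_univ : ν Set.univ = ENNReal.ofReal (a 0 ^ (1 / (κ : ℝ))) := by
    have h := hνm 0
    simpa only [pow_zero, ENNReal.ofReal_one, lintegral_one] using h
  haveI : IsFiniteMeasure ν := ⟨by rw [hν_univ]; exact ENNReal.ofReal_lt_top⟩
  have hrep : IsRepMeas a (powMeas ν κ) := by
    refine ⟨ha, powMeas_neg ν hν0 κ, fun n => ?_⟩
    rw [powMeas_moment ν hν0 n κ, hνm n, ← ENNReal.ofReal_pow (hb n)]
    rw [hrpow_pow (a n) (ha n)]
  have hμeq : μ = powMeas ν κ := hdet μ _ ⟨ha, hμ0, hμm⟩ hrep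
  have hsupp : msupport μ = msupport (powMeas ν κ) := by rw [hμeq]
  have hν_nonneg : ∀ x ∈ msupport ν, (0 : ℝ) ≤ x := by
    intro x hx
    by_contra hxn
    push_neg at hxn
    have := hx _ isOpen_Iio hxn
    rw [hν0] at this
    exact lt_irrefl _ this
  have part1 : msupport ν ⊆ {x : ℝ | 0 ≤ x ∧ x ^ κ ∈ msupport μ} := by
    intro x hx
    exact ⟨hν_nonneg x hx, by rw [hsupp]; exact powMeas_supp_mem ν hx κ⟩
  refine ⟨part1, ?_, ?_, ?_⟩
  · have hinj : Function.Injective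
        (fun x : msupport ν => (⟨x.1 ^ κ, (part1 x.2).2⟩ : msupport μ)) := by
      intro x y hxy
      have h1 : x.1 ^ κ = y.1 ^ κ := congrArg Subtype.val hxy
      exact Subtype.ext ((pow_left_strictMonoOn₀ (M₀ := ℝ) (n := κ) (by omega)).injOn
        (hν_nonneg _ x.2) (hν_nonneg _ y.2) h1)
    exact Cardinal.mk_le_of_injective hinj
  · constructor
    · rintro ⟨M, hM⟩
      refine ⟨max 1 M, fun x hx => ?_⟩
      have hxk : x ^ κ ≤ M := hM (part1 hx).2
      rcases le_or_gt x 1 with h1 | h1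
      · exact le_trans h1 (le_max_left _ _)
      · calc x ≤ x ^ κ := le_self_pow₀ h1.le (by omega)
          _ ≤ M := hxk
          _ ≤ max 1 M := le_max_right _ _
    · rintro ⟨M, hM⟩
      refine ⟨(max M 0) ^ κ, fun y hy => ?_⟩
      exact powMeas_bound ν hν0 (le_max_right M 0)
        (fun x hx => le_trans (hM hx) (le_max_left _ _)) κ y (hsupp ▸ hy)
  · intro s hs
    by_cases hE : (msupport ν).Nonempty
    · obtain ⟨x0, hx0⟩ := hE
      have hs0 : 0 ≤ s := le_trans (pow_nonneg (hν_nonneg _ hx0) κ) (hs.1 (part1 hx0).2)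
      constructor
      · intro x hx
        have hx0n := hν_nonneg x hx
        have hxs : x ^ κ ≤ s := hs.1 (part1 hx).2
        calc x = (x ^ κ) ^ (1 / (κ : ℝ)) := (hpow_rpow x hx0n).symm
          _ ≤ s ^ (1 / (κ : ℝ)) :=
            Real.rpow_le_rpow (pow_nonneg hx0n κ) hxs (by positivity)
      · intro c hc
        have hc0 : 0 ≤ c := le_trans (hν_nonneg _ hx0) (hc hx0)
        have hbound := powMeas_bound ν hν0 hc0 (fun x hx => hc hx) κ
        have hsc : s ≤ c ^ κ := hs.2 (fun y hy => hbound y (hsupp ▸ hy))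
        calc s ^ (1 / (κ : ℝ)) ≤ (c ^ κ) ^ (1 / (κ : ℝ)) :=
            Real.rpow_le_rpow hs0 hsc (by positivity)
          _ = c := hpow_rpow c hc0
    · exfalso
      rw [Set.not_nonempty_iff_eq_empty] at hE
      have hν_univ0 : ν Set.univ = 0 := by
        have h := measure_compl_msupport ν
        rwa [hE, Set.compl_empty] at h
      have hb0 : a 0 ^ (1 / (κ : ℝ)) = 0 := by
        have h1 : ENNReal.ofReal (a 0 ^ (1 / (κ : ℝ))) = 0 := by rw [← hν_univ, hν_univ0]
        exact le_antisymm (ENNReal.ofReal_eq_zero.1 h1) (hb 0)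
      have ha0 : a 0 = 0 := by
        have := hrpow_pow (a 0) (ha 0)
        rw [hb0] at this
        simpa [zero_pow (by omega : κ ≠ 0)] using this.symm
      have hμ_univ0 : μ Set.univ = 0 := by
        have h := hμm 0
        simp only [pow_zero, ENNReal.ofReal_one, lintegral_one] at h
        rw [h, ha0, ENNReal.ofReal_zero]
      have hFempty : msupport μ = ∅ := by
        ext x
        simp only [msupport, Set.mem_setOf_eq, Set.mem_empty_iff_false, iff_false, not_forall]
        refine ⟨Set.univ, isOpen_univ, Set.mem_univ x, ?_⟩
        rw [hμ_univ0]
        exact lt_irrefl 0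
      rw [hFempty] at hs
      have h1 : s ≤ s - 1 := hs.2 (fun y hy => hy.elim)
      linarith
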